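/- There is a bijection between the set of staircase monomials in the variables x_{i,j} (1 ≤ i ≤ m, 1 ≤ j ≤ n) and the set of (m+n)-tuples (x_1,...,x_m, y_1,...,y_n) of nonnegative integers with x_1 + ... + x_m = y_1 + ... + y_n, sending a staircase monomial to the tuple of row sums and column sums of its exponent matrix. -/

import Mathlib

open Finset

namespace Stmt11Aux

variable {m n : ℕ}

def S (f : Fin m × Fin n → ℕ) (i j : ℕ) : ℕ :=
  ∑ q ∈ Finset.univ.filter (fun q : Fin m × Fin n => q.1.val < i ∧ j ≤ q.2.val), f q

lemma single_eq (f : Fin m × Fin n → ℕ) (a : Fin m) (b : Fin n) :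
    f (a, b) = ∑ q ∈ Finset.univ.filter
      (fun q : Fin m × Fin n => q.1.val = a.val ∧ q.2.val = b.val), f q := by
  have h : Finset.univ.filter (fun q : Fin m × Fin n => q.1.val = a.val ∧ q.2.val = b.val)
      = {(a, b)} := by
    ext ⟨qa, qb⟩
    simp [Fin.ext_iff, Prod.ext_iff]
  rw [h, Finset.sum_singleton]

lemma S_identity (f : Fin m × Fin n → ℕ) (a : Fin m) (b : Fin n) :
    S f (a.val + 1) b.val + S f a.val (b.val + 1)
      = S f a.val b.val + S f (a.val + 1) (b.val + 1) + f (a, b) := by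
  rw [single_eq f a b]
  simp only [S, Finset.sum_filter]
  rw [← Finset.sum_add_distrib, ← Finset.sum_add_distrib, ← Finset.sum_add_distrib]
  apply Finset.sum_congr rfl
  intro q _
  split_ifs <;> omega

lemma S_split_col (f : Fin m × Fin n → ℕ) (i j : ℕ) :
    S f i 0 = S f i j +
      ∑ q ∈ Finset.univ.filter (fun q : Fin m × Fin n => q.1.val < i ∧ q.2.val < j), f q := by
  simp only [S, Finset.sum_filter]
  rw [← Finset.sum_add_distrib]
  apply Finset.sum_congr rfl
  intro q _
  split_ifs <;> omega

lemma S_split_row (f : Fin m × Fin n → ℕ) (i j : ℕ) :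
    S f m j = S f i j +
      ∑ q ∈ Finset.univ.filter (fun q : Fin m × Fin n => i ≤ q.1.val ∧ j ≤ q.2.val), f q := by
  simp only [S, Finset.sum_filter]
  rw [← Finset.sum_add_distrib]
  apply Finset.sum_congr rfl
  intro q _
  have := q.1.isLt
  split_ifs <;> omega

lemma S_min (f : Fin m × Fin n → ℕ)
    (hf : ∀ (i i' : Fin m) (j j' : Fin n), i < i' → j < j' → f (i, j) * f (i', j') = 0)
    (i j : ℕ) : S f i j = min (S f i 0) (S f m j) := by
  have h1 := S_split_col f i j
  have h2 := S_split_row f i j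
  refine le_antisymm (le_min (by omega) (by omega)) ?_
  by_contra hc
  push_neg at hc
  have hT1 : ∑ q ∈ Finset.univ.filter
      (fun q : Fin m × Fin n => q.1.val < i ∧ q.2.val < j), f q ≠ 0 := by omega
  have hT2 : ∑ q ∈ Finset.univ.filter
      (fun q : Fin m × Fin n => i ≤ q.1.val ∧ j ≤ q.2.val), f q ≠ 0 := by omega
  obtain ⟨q1, hq1mem, hq1⟩ := Finset.exists_ne_zero_of_sum_ne_zero hT1
  obtain ⟨q2, hq2mem, hq2⟩ := Finset.exists_ne_zero_of_sum_ne_zero hT2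
  simp only [Finset.mem_filter, Finset.mem_univ, true_and] at hq1mem hq2mem
  have hz := hf q1.1 q2.1 q1.2 q2.2 (Fin.lt_def.mpr (by omega)) (Fin.lt_def.mpr (by omega))
  rw [Prod.mk.eta, Prod.mk.eta] at hz
  rcases Nat.mul_eq_zero.mp hz with h | h
  · exact hq1 h
  · exact hq2 h

lemma S_left (f : Fin m × Fin n → ℕ) (i : ℕ) :
    S f i 0 = ∑ a ∈ Finset.univ.filter (fun a : Fin m => a.val < i),
      ∑ b : Fin n, f (a, b) := by
  rw [S, Finset.sum_filter, Fintype.sum_prod_type, Finset.sum_filter]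
  apply Finset.sum_congr rfl
  intro a _
  by_cases h : a.val < i <;> simp [h]

lemma S_right (f : Fin m × Fin n → ℕ) (j : ℕ) :
    S f m j = ∑ b ∈ Finset.univ.filter (fun b : Fin n => j ≤ b.val),
      ∑ a : Fin m, f (a, b) := by
  rw [S, Finset.sum_filter, Fintype.sum_prod_type_right, Finset.sum_filter]
  apply Finset.sum_congr rfl
  intro b _
  by_cases h : j ≤ b.val <;> simp [h, Fin.is_lt]

lemma cover_mono (A : ℕ → ℕ) (hA : ∀ t, A t ≤ A (t + 1)) (M k : ℕ)
    (h0 : A 0 ≤ k) (hM : k < A M) :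
    ∑ a ∈ Finset.range M, (if A a ≤ k ∧ k < A (a + 1) then 1 else 0) = 1 := by
  have hmono : Monotone A := monotone_nat_of_le_succ hA
  induction M with
  | zero => omega
  | succ M ih =>
    rw [Finset.sum_range_succ]
    rcases lt_or_ge k (A M) with h | h
    · rw [ih h, if_neg (by omega)]
    · rw [Finset.sum_eq_zero, if_pos ⟨h, hM⟩]
      intro b hb
      have : A (b + 1) ≤ A M := hmono (Finset.mem_range.mp hb)
      rw [if_neg (by omega)]

lemma cover_anti (B : ℕ → ℕ) (hB : ∀ t, B (t + 1) ≤ B t) (M k : ℕ)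
    (h0 : B M ≤ k) (hM : k < B 0) :
    ∑ b ∈ Finset.range M, (if B (b + 1) ≤ k ∧ k < B b then 1 else 0) = 1 := by
  have hanti : Antitone B := antitone_nat_of_succ_le hB
  induction M with
  | zero => omega
  | succ M ih =>
    rw [Finset.sum_range_succ]
    rcases le_or_gt (B M) k with h | h
    · rw [ih h, if_neg (by omega)]
    · rw [Finset.sum_eq_zero, if_pos ⟨h0, h⟩]
      intro b hb
      have : B M ≤ B (b + 1) := hanti (Nat.succ_le_of_lt (Finset.mem_range.mp hb))
      rw [if_neg (by omega)]

lemma interval_count (N u v : ℕ) (hv : v ≤ N) :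
    ∑ k ∈ Finset.range N, (if u ≤ k ∧ k < v then 1 else 0) = v - u := by
  have h : Finset.filter (fun k => u ≤ k ∧ k < v) (Finset.range N) = Finset.Ico u v := by
    ext k
    simp only [Finset.mem_filter, Finset.mem_range, Finset.mem_Ico]
    omega
  rw [← Finset.sum_filter, h, Finset.sum_const, smul_eq_mul, mul_one, Nat.card_Ico]
end Stmt11Aux

open Stmt11Aux in
/-- The map sending a staircase monomial (given by its exponent matrix) to the
`(m+n)`-tuple of its row sums and column sums is a bijection onto the set of tuples
`(x, y)` with `∑ xᵢ = ∑ yⱼ`. -/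
theorem stmt11 (m n : ℕ) :
    Function.Injective
      (fun p : {p : Fin m × Fin n →₀ ℕ //
          ∀ (i i' : Fin m) (j j' : Fin n), i < i' → j < j' → p (i, j) * p (i', j') = 0} =>
        ((fun i => ∑ j, p.1 (i, j), fun j => ∑ i, p.1 (i, j)) : (Fin m → ℕ) × (Fin n → ℕ)))
    ∧ Set.range
      (fun p : {p : Fin m × Fin n →₀ ℕ //
          ∀ (i i' : Fin m) (j j' : Fin n), i < i' → j < j' → p (i, j) * p (i', j') = 0} =>
        ((fun i => ∑ j, p.1 (i, j), fun j => ∑ i, p.1 (i, j)) : (Fin m → ℕ) × (Fin n → ℕ)))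
      = {xy : (Fin m → ℕ) × (Fin n → ℕ) | ∑ i, xy.1 i = ∑ j, xy.2 j} := by
  constructor
  · intro p q hpq
    simp only [Prod.mk.injEq] at hpq
    obtain ⟨hx, hy⟩ := hpq
    have hx' : ∀ i : ℕ, S (⇑p.1) i 0 = S (⇑q.1) i 0 := by
      intro i
      rw [S_left, S_left]
      exact Finset.sum_congr rfl fun a _ => congrFun hx a
    have hy' : ∀ j : ℕ, S (⇑p.1) m j = S (⇑q.1) m j := by
      intro j
      rw [S_right, S_right]
      exact Finset.sum_congr rfl fun b _ => congrFun hy b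
    have hS : ∀ i j : ℕ, S (⇑p.1) i j = S (⇑q.1) i j := by
      intro i j
      rw [S_min _ p.2, S_min _ q.2, hx' i, hy' j]
    apply Subtype.ext
    ext ⟨a, b⟩
    have h1 := S_identity (⇑p.1) a b
    have h2 := S_identity (⇑q.1) a b
    have e1 := hS (a.val + 1) b.val
    have e2 := hS a.val (b.val + 1)
    have e3 := hS a.val b.val
    have e4 := hS (a.val + 1) (b.val + 1)
    omega
  · ext xy
    simp only [Set.mem_range, Set.mem_setOf_eq]
    constructor
    · rintro ⟨p, rfl⟩
      exact Finset.sum_comm (s := Finset.univ) (t := Finset.univ) (f := fun i j => p.1 (i, j))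
    · obtain ⟨x, y⟩ := xy
      intro hxy
      simp only at hxy ⊢
      -- setup
      set x' : ℕ → ℕ := fun t => if h : t < m then x ⟨t, h⟩ else 0 with hx'def
      set y' : ℕ → ℕ := fun t => if h : t < n then y ⟨t, h⟩ else 0 with hy'def
      set A : ℕ → ℕ := fun i => ∑ t ∈ Finset.range i, x' t with hAdef
      set B : ℕ → ℕ := fun j => ∑ t ∈ Finset.Ico j n, y' t with hBdef
      set N := A m with hNdef
      have hAstep : ∀ t, A (t + 1) = A t + x' t := by
        intro t; simp only [hAdef, Finset.sum_range_succ]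
      have hAsucc : ∀ t, A t ≤ A (t + 1) := by intro t; rw [hAstep]; omega
      have hAmono : Monotone A := monotone_nat_of_le_succ hAsucc
      have hA0 : A 0 = 0 := by simp [hAdef]
      have hAm : A m = ∑ i, x i := by
        simp only [hAdef]
        rw [← Fin.sum_univ_eq_sum_range]
        exact Finset.sum_congr rfl fun i _ => by simp [hx'def]
      have hBstep : ∀ t, t < n → B t = y' t + B (t + 1) := by
        intro t ht
        simp only [hBdef]
        rw [Finset.sum_eq_sum_Ico_succ_bot ht]
      have hBsucc : ∀ t, B (t + 1) ≤ B t := by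
        intro t
        rcases lt_or_ge t n with h | h
        · rw [hBstep t h]; omega
        · simp only [hBdef]
          rw [Finset.Ico_eq_empty (by omega), Finset.Ico_eq_empty (by omega)]
      have hBanti : Antitone B := antitone_nat_of_succ_le hBsucc
      have hB0 : B 0 = N := by
        simp only [hBdef, hNdef, hAm]
        rw [← Finset.range_eq_Ico, ← Fin.sum_univ_eq_sum_range, hxy]
        exact Finset.sum_congr rfl fun j _ => by simp [hy'def]
      have hBn : B n = 0 := by simp [hBdef]
      have hBle : ∀ t, B t ≤ N := by
        intro t
        rw [← hB0]
        exact hBanti (Nat.zero_le t)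
      have hAle : ∀ t, t ≤ m → A t ≤ N := fun t ht => hAmono ht
      -- the matrix
      set g : Fin m × Fin n → ℕ := fun q =>
        ∑ k ∈ Finset.range N,
          (if A q.1.val ≤ k ∧ k < A (q.1.val + 1) then 1 else 0) *
          (if B (q.2.val + 1) ≤ k ∧ k < B q.2.val then 1 else 0) with hgdef
      have hgpos : ∀ (a : Fin m) (b : Fin n), g (a, b) ≠ 0 →
          ∃ k, (A a.val ≤ k ∧ k < A (a.val + 1)) ∧ (B (b.val + 1) ≤ k ∧ k < B b.val) := by
        intro a b hg
        obtain ⟨k, _, hk⟩ := Finset.exists_ne_zero_of_sum_ne_zero hg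
        refine ⟨k, ?_⟩
        split_ifs at hk with h1 h2
        · exact ⟨h1, h2⟩
        all_goals simp at hk
      have hstair : ∀ (i i' : Fin m) (j j' : Fin n), i < i' → j < j' →
          g (i, j) * g (i', j') = 0 := by
        intro i i' j j' hi hj
        by_contra hc
        obtain ⟨h1, h2⟩ := Nat.mul_ne_zero_iff.mp hc
        obtain ⟨k, ⟨_, hk2⟩, ⟨hk3, _⟩⟩ := hgpos i j h1
        obtain ⟨k', ⟨hk1', _⟩, ⟨_, hk4'⟩⟩ := hgpos i' j' h2
        have hA' : A (i.val + 1) ≤ A i'.val := hAmono (Fin.lt_def.mp hi)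
        have hB' : B j'.val ≤ B (j.val + 1) := hBanti (Fin.lt_def.mp hj)
        omega
      -- row sums
      have hrow : ∀ a : Fin m, ∑ b : Fin n, g (a, b) = x a := by
        intro a
        simp only [hgdef]
        rw [Finset.sum_comm]
        have hcov : ∀ k ∈ Finset.range N,
            (∑ b : Fin n, (if A a.val ≤ k ∧ k < A (a.val + 1) then 1 else 0) *
              (if B (b.val + 1) ≤ k ∧ k < B b.val then 1 else 0))
            = (if A a.val ≤ k ∧ k < A (a.val + 1) then 1 else 0) := by
          intro k hk
          rw [← Finset.mul_sum]
          have : (∑ b : Fin n, (if B (b.val + 1) ≤ k ∧ k < B b.val then 1 else 0)) = 1 := by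
            rw [Fin.sum_univ_eq_sum_range (fun t => if B (t + 1) ≤ k ∧ k < B t then 1 else 0)]
            exact cover_anti B hBsucc n k (by rw [hBn]; omega)
              (by rw [hB0]; exact Finset.mem_range.mp hk)
          rw [this, mul_one]
        rw [Finset.sum_congr rfl hcov,
          interval_count N (A a.val) (A (a.val + 1)) (hAle _ a.isLt)]
        rw [hAstep]
        have : x' a.val = x a := by simp [hx'def]
        omega
      -- column sums
      have hcol : ∀ b : Fin n, ∑ a : Fin m, g (a, b) = y b := by
        intro b
        simp only [hgdef]
        rw [Finset.sum_comm]
        have hcov : ∀ k ∈ Finset.range N,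
            (∑ a : Fin m, (if A a.val ≤ k ∧ k < A (a.val + 1) then 1 else 0) *
              (if B (b.val + 1) ≤ k ∧ k < B b.val then 1 else 0))
            = (if B (b.val + 1) ≤ k ∧ k < B b.val then 1 else 0) := by
          intro k hk
          rw [← Finset.sum_mul]
          have : (∑ a : Fin m, (if A a.val ≤ k ∧ k < A (a.val + 1) then 1 else 0)) = 1 := by
            rw [Fin.sum_univ_eq_sum_range (fun t => if A t ≤ k ∧ k < A (t + 1) then 1 else 0)]
            exact cover_mono A hAsucc m k (by omega) (Finset.mem_range.mp hk)
          rw [this, one_mul]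
        rw [Finset.sum_congr rfl hcov,
          interval_count N (B (b.val + 1)) (B b.val) (hBle _)]
        have hs := hBstep b.val b.isLt
        have : y' b.val = y b := by simp [hy'def]
        omega
      refine ⟨⟨Finsupp.equivFunOnFinite.symm g, ?_⟩, ?_⟩
      · intro i i' j j' hi hj
        simpa using hstair i i' j j' hi hj
      · simp only [Finsupp.coe_equivFunOnFinite_symm, Prod.mk.injEq]
        exact ⟨funext hrow, funext hcol⟩
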